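/- arXiv:1706.02333 — 2 statements merged into one kernel-verified Lean document; each statement's English description precedes it below -/
import Mathlib

section
/- For an m×n matrix space over an infinite field k, every orbit of the group B_-(m) × B_+(n) (invertible lower triangular m×m matrices times invertible upper triangular n×n matrices, acting by (b, c)·M = b^{-1} M c, or equivalently by row/column operations) contains exactly one m×n partial permutation matrix. In particular, the number of such orbits is finite. -/
/-- A partial permutation matrix: entries in `{0,1}`, at most one `1` in each row and
in each column. -/
def IsPartialPerm {k : Type} [Field k] {m n : ℕ} (w : Matrix (Fin m) (Fin n) k) : Prop :=
  (∀ i j, w i j = 0 ∨ w i j = 1) ∧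
  (∀ i j j', w i j = 1 → w i j' = 1 → j = j') ∧
  (∀ i i' j, w i j = 1 → w i' j = 1 → i = i')

/-- `M` and `N` are in the same orbit of `B_-(m) × B_+(n)` acting by `M ↦ b⁻¹ M c` with
`b` invertible lower triangular and `c` invertible upper triangular. -/
def SameBorbit {k : Type} [Field k] {m n : ℕ} (M N : Matrix (Fin m) (Fin n) k) : Prop :=
  ∃ (b : Matrix (Fin m) (Fin m) k) (c : Matrix (Fin n) (Fin n) k),
    IsUnit b.det ∧ IsUnit c.det ∧
    (∀ i j, i < j → b i j = 0) ∧ (∀ i j, j < i → c i j = 0) ∧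
    N = b⁻¹ * M * c



open Matrix Finset

namespace Stmt5

variable {k : Type} [Field k]


lemma sum_castLE {N : Type*} [AddCommMonoid N] {m i : ℕ} (h : i ≤ m) (f : Fin m → N)
    (hf : ∀ s : Fin m, i ≤ (s : ℕ) → f s = 0) :
    ∑ s, f s = ∑ s : Fin i, f (Fin.castLE h s) := by
  classical
  set g : ℕ → N := fun x => if hx : x < m then f ⟨x, hx⟩ else 0 with hg
  have h1 : ∑ s : Fin m, f s = ∑ x ∈ range m, g x := by
    rw [← Fin.sum_univ_eq_sum_range g m]
    refine Finset.sum_congr rfl fun x _ => ?_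
    simp [hg, x.isLt]
  have h2 : ∑ s : Fin i, f (Fin.castLE h s) = ∑ x ∈ range i, g x := by
    rw [← Fin.sum_univ_eq_sum_range g i]
    refine Finset.sum_congr rfl fun x _ => ?_
    have : (x : ℕ) < m := lt_of_lt_of_le x.isLt h
    simp only [hg, this, dif_pos]
    rfl
  rw [h1, h2]
  refine (Finset.sum_subset (Finset.range_subset_range.2 h) fun x hx hxi => ?_).symm
  simp only [Finset.mem_range] at hx hxi
  simp only [hg, hx, dif_pos]
  exact hf _ (not_lt.1 hxi)

/-- top-left corner submatrix -/
def corner {m n : ℕ} (M : Matrix (Fin m) (Fin n) k) (i j : ℕ) (hi : i ≤ m) (hj : j ≤ n) :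
    Matrix (Fin i) (Fin j) k := M.submatrix (Fin.castLE hi) (Fin.castLE hj)

lemma corner_mul_left {m n : ℕ} (b : Matrix (Fin m) (Fin m) k) (N : Matrix (Fin m) (Fin n) k)
    (hb : ∀ i j, i < j → b i j = 0) (i j : ℕ) (hi : i ≤ m) (hj : j ≤ n) :
    corner (b * N) i j hi hj = corner b i i hi hi * corner N i j hi hj := by
  ext a t
  show (b * N) (Fin.castLE hi a) (Fin.castLE hj t) = _
  rw [Matrix.mul_apply, Matrix.mul_apply]
  rw [sum_castLE hi (fun s => b (Fin.castLE hi a) s * N s (Fin.castLE hj t))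
    (fun s hs => by
      show b _ _ * N _ _ = 0
      rw [hb _ _ (by
        show ((Fin.castLE hi a : Fin m) : ℕ) < (s : ℕ)
        exact lt_of_lt_of_le a.isLt hs), zero_mul])]
  rfl

lemma corner_mul_right {m n : ℕ} (M : Matrix (Fin m) (Fin n) k) (c : Matrix (Fin n) (Fin n) k)
    (hc : ∀ i j, j < i → c i j = 0) (i j : ℕ) (hi : i ≤ m) (hj : j ≤ n) :
    corner (M * c) i j hi hj = corner M i j hi hj * corner c j j hj hj := by
  ext a t
  show (M * c) (Fin.castLE hi a) (Fin.castLE hj t) = _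
  rw [Matrix.mul_apply, Matrix.mul_apply]
  rw [sum_castLE hj (fun s => M (Fin.castLE hi a) s * c s (Fin.castLE hj t))
    (fun s hs => by
      show M _ _ * c _ _ = 0
      rw [hc _ _ (by
        show ((Fin.castLE hj t : Fin n) : ℕ) < (s : ℕ)
        exact lt_of_lt_of_le t.isLt hs), mul_zero])]
  rfl

lemma lower_corner_lower {m : ℕ} (b : Matrix (Fin m) (Fin m) k)
    (hb : ∀ i j, i < j → b i j = 0) (i : ℕ) (hi : i ≤ m) :
    ∀ a t : Fin i, a < t → corner b i i hi hi a t = 0 := fun a t hat =>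
  hb _ _ (by simpa using hat)

lemma det_lower {m : ℕ} (b : Matrix (Fin m) (Fin m) k)
    (hb : ∀ i j, i < j → b i j = 0) : b.det = ∏ a, b a a :=
  Matrix.det_of_lowerTriangular b (fun x y hxy => hb x y (by simpa using hxy))

lemma det_upper {m : ℕ} (c : Matrix (Fin m) (Fin m) k)
    (hc : ∀ i j, j < i → c i j = 0) : c.det = ∏ a, c a a :=
  Matrix.det_of_upperTriangular (fun x y hxy => hc x y (by simpa using hxy))

lemma corner_det_unit_lower {m : ℕ} (b : Matrix (Fin m) (Fin m) k)
    (hb : ∀ i j, i < j → b i j = 0) (hdet : IsUnit b.det) (i : ℕ) (hi : i ≤ m) :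
    IsUnit (corner b i i hi hi).det := by
  rw [det_lower b hb] at hdet
  rw [det_lower (corner b i i hi hi) (lower_corner_lower b hb i hi)]
  rw [isUnit_iff_ne_zero, Finset.prod_ne_zero_iff] at hdet ⊢
  exact fun a _ => hdet _ (Finset.mem_univ _)

lemma corner_det_unit_upper {m : ℕ} (c : Matrix (Fin m) (Fin m) k)
    (hc : ∀ i j, j < i → c i j = 0) (hdet : IsUnit c.det) (i : ℕ) (hi : i ≤ m) :
    IsUnit (corner c i i hi hi).det := by
  rw [det_upper c hc] at hdet
  rw [det_upper (corner c i i hi hi) (fun a t hat => hc _ _ (by simpa using hat))]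
  rw [isUnit_iff_ne_zero, Finset.prod_ne_zero_iff] at hdet ⊢
  exact fun a _ => hdet _ (Finset.mem_univ _)

lemma rank_corner_invariant {m n : ℕ} {M N : Matrix (Fin m) (Fin n) k}
    (h : ∃ (b : Matrix (Fin m) (Fin m) k) (c : Matrix (Fin n) (Fin n) k),
      IsUnit b.det ∧ IsUnit c.det ∧
      (∀ i j, i < j → b i j = 0) ∧ (∀ i j, j < i → c i j = 0) ∧
      N = b⁻¹ * M * c) (i j : ℕ) (hi : i ≤ m) (hj : j ≤ n) :
    (corner N i j hi hj).rank = (corner M i j hi hj).rank := by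
  obtain ⟨b, c, hbd, hcd, hb, hc, rfl⟩ := h
  have key : b * (b⁻¹ * M * c) = M * c := by
    rw [← Matrix.mul_assoc, ← Matrix.mul_assoc, Matrix.mul_nonsing_inv _ hbd, Matrix.one_mul]
  calc (corner (b⁻¹ * M * c) i j hi hj).rank
      = (corner b i i hi hi * corner (b⁻¹ * M * c) i j hi hj).rank := by
        rw [Matrix.rank_mul_eq_right_of_isUnit_det _ _ (corner_det_unit_lower b hb hbd i hi)]
    _ = (corner (b * (b⁻¹ * M * c)) i j hi hj).rank := by rw [corner_mul_left b _ hb]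
    _ = (corner (M * c) i j hi hj).rank := by rw [key]
    _ = (corner M i j hi hj * corner c j j hj hj).rank := by rw [corner_mul_right M c hc]
    _ = (corner M i j hi hj).rank := by
        rw [Matrix.rank_mul_eq_left_of_isUnit_det _ _ (corner_det_unit_upper c hc hcd j hj)]




lemma pp_rank [DecidableEq k] {m n : ℕ} (w : Matrix (Fin m) (Fin n) k) (hw : IsPartialPerm w) :
    w.rank = (univ.filter fun p : Fin m × Fin n => w p.1 p.2 = 1).card := by
  classical
  obtain ⟨h01, hrow, hcol⟩ := hw
  set S : Finset (Fin n) := univ.filter (fun j => ∃ i, w i j = 1) with hS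
  -- the pivot row of each nonzero column
  have hmemS : ∀ j : {x // x ∈ S}, ∃ i, w i (j : Fin n) = 1 := fun j =>
    (Finset.mem_filter.mp j.2).2
  set f : {x // x ∈ S} → Fin m := fun j => (hmemS j).choose with hf
  have hf1 : ∀ j, w (f j) (j : Fin n) = 1 := fun j => (hmemS j).choose_spec
  have hfinj : Function.Injective f := by
    intro a b hab
    have := hrow (f a) a b (hf1 a) (by rw [hab]; exact hf1 b)
    exact Subtype.ext this
  set g : {x // x ∈ S} → (Fin m → k) := fun j => Pi.single (f j) 1 with hg
  have hgli : LinearIndependent k g := by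
    have := (Pi.basisFun k (Fin m)).linearIndependent
    have h2 := this.comp f hfinj
    convert h2 using 1
    funext j
    rw [hg, Function.comp_apply, Pi.basisFun_apply]
  -- columns description
  have hcolmem : ∀ j : Fin n, (wᵀ j) = 0 ∨ ∃ a : {x // x ∈ S}, (a : Fin n) = j ∧ wᵀ j = g a := by
    intro j
    by_cases hj : j ∈ S
    · right
      refine ⟨⟨j, hj⟩, rfl, ?_⟩
      funext i
      show w i j = (Pi.single (f ⟨j, hj⟩) (1:k) : Fin m → k) i
      rcases eq_or_ne i (f ⟨j, hj⟩) with rfl | hne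
      · rw [Pi.single_eq_same]; exact hf1 ⟨j, hj⟩
      · rw [Pi.single_eq_of_ne hne]
        rcases h01 i j with h | h
        · exact h
        · exact absurd (hcol i (f ⟨j, hj⟩) j h (hf1 ⟨j, hj⟩)) hne
    · left
      funext i
      show w i j = 0
      rcases h01 i j with h | h
      · exact h
      · exact absurd (Finset.mem_filter.mpr ⟨Finset.mem_univ _, ⟨i, h⟩⟩) hj
  have hspan : Submodule.span k (Set.range wᵀ) = Submodule.span k (Set.range g) := by
    apply le_antisymm
    · rw [Submodule.span_le]
      rintro x ⟨j, rfl⟩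
      rcases hcolmem j with h | ⟨a, _, h⟩
      · rw [h]; exact Submodule.zero_mem _
      · rw [h]; exact Submodule.subset_span ⟨a, rfl⟩
    · rw [Submodule.span_le]
      rintro x ⟨a, rfl⟩
      rcases hcolmem (a : Fin n) with h | ⟨a', ha', h⟩
      · exfalso
        have := hf1 a
        have h0 : w (f a) (a : Fin n) = 0 := congrFun h (f a)
        rw [this] at h0; exact one_ne_zero h0
      · have haa : a' = a := Subtype.ext ha'
        subst haa
        exact h ▸ Submodule.subset_span ⟨(a' : Fin n), rfl⟩
  rw [Matrix.rank_eq_finrank_span_cols, show w.col = wᵀ from rfl, hspan, finrank_span_eq_card hgli, Fintype.card_coe]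
  -- card S = card pairs
  refine (Finset.card_bij (fun (p : Fin m × Fin n) hp => p.2) ?_ ?_ ?_).symm
  · intro p hp
    exact Finset.mem_filter.mpr ⟨Finset.mem_univ _, ⟨p.1, (Finset.mem_filter.mp hp).2⟩⟩
  · intro p hp q hq hpq
    have hpq' : p.2 = q.2 := hpq
    have h1 : w p.1 p.2 = 1 := (Finset.mem_filter.mp hp).2
    have h2 : w q.1 q.2 = 1 := (Finset.mem_filter.mp hq).2
    have : p.1 = q.1 := hcol p.1 q.1 p.2 h1 (by rw [hpq']; exact h2)
    exact Prod.ext this hpq'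
  · intro j hj
    obtain ⟨i, hi⟩ := (Finset.mem_filter.mp hj).2
    exact ⟨(i, j), Finset.mem_filter.mpr ⟨Finset.mem_univ _, hi⟩, rfl⟩



def cnt [DecidableEq k] {m n : ℕ} (M : Matrix (Fin m) (Fin n) k) (i j : ℕ) : ℕ :=
  (univ.filter fun p : Fin m × Fin n => (p.1 : ℕ) < i ∧ (p.2 : ℕ) < j ∧ M p.1 p.2 = 1).card

lemma corner_pp {m n : ℕ} {w : Matrix (Fin m) (Fin n) k} (hw : IsPartialPerm w)
    (i j : ℕ) (hi : i ≤ m) (hj : j ≤ n) : IsPartialPerm (corner w i j hi hj) := by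
  obtain ⟨h01, hrow, hcol⟩ := hw
  refine ⟨fun a b => h01 _ _, fun a b b' h h' => ?_, fun a a' b h h' => ?_⟩
  · have := hrow _ _ _ h h'
    exact Fin.castLE_injective hj this
  · have := hcol _ _ _ h h'
    exact Fin.castLE_injective hi this

lemma corner_rank_eq_cnt [DecidableEq k] {m n : ℕ} {w : Matrix (Fin m) (Fin n) k} (hw : IsPartialPerm w)
    (i j : ℕ) (hi : i ≤ m) (hj : j ≤ n) : (corner w i j hi hj).rank = cnt w i j := by
  rw [pp_rank _ (corner_pp hw i j hi hj), cnt]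
  refine Finset.card_bij (fun (p : Fin i × Fin j) _ => ((Fin.castLE hi p.1, Fin.castLE hj p.2) :
    Fin m × Fin n)) ?_ ?_ ?_
  · intro p hp
    refine Finset.mem_filter.mpr ⟨Finset.mem_univ _, p.1.isLt, p.2.isLt,
      (Finset.mem_filter.mp hp).2⟩
  · intro p hp q hq hpq
    have h1 : Fin.castLE hi p.1 = Fin.castLE hi q.1 := congrArg Prod.fst hpq
    have h2 : Fin.castLE hj p.2 = Fin.castLE hj q.2 := congrArg Prod.snd hpq
    exact Prod.ext (Fin.castLE_injective hi h1) (Fin.castLE_injective hj h2)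
  · intro p hp
    obtain ⟨-, h1, h2, h3⟩ := Finset.mem_filter.mp hp
    refine ⟨(⟨(p.1 : ℕ), h1⟩, ⟨(p.2 : ℕ), h2⟩), Finset.mem_filter.mpr ⟨Finset.mem_univ _, ?_⟩, ?_⟩
    · show w _ _ = 1
      convert h3 <;> exact Fin.ext rfl
    · exact Prod.ext (Fin.ext rfl) (Fin.ext rfl)

lemma cnt_rec [DecidableEq k] {m n : ℕ} (M : Matrix (Fin m) (Fin n) k) (a : Fin m) (b : Fin n) :
    cnt M ((a : ℕ) + 1) ((b : ℕ) + 1) + cnt M a b =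
      cnt M a ((b : ℕ) + 1) + cnt M ((a : ℕ) + 1) b + (if M a b = 1 then 1 else 0) := by
  have hpt : (if M a b = 1 then 1 else 0) =
      ∑ p : Fin m × Fin n, if p = (a, b) then (if M p.1 p.2 = 1 then 1 else 0) else 0 := by
    rw [Finset.sum_ite_eq' univ ((a, b) : Fin m × Fin n)
      (fun p => if M p.1 p.2 = 1 then 1 else 0)]
    simp
  simp only [cnt, Finset.card_filter]
  rw [← Finset.sum_add_distrib, hpt, ← Finset.sum_add_distrib, ← Finset.sum_add_distrib]
  refine Finset.sum_congr rfl fun p _ => ?_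
  rcases p with ⟨x, y⟩
  by_cases hM : M x y = 1
  · simp only [Prod.mk.injEq, hM, eq_self_iff_true, and_true, if_true, Fin.ext_iff]
    split_ifs <;> omega
  · simp [hM]

lemma pp_eq_of_cnt_eq [DecidableEq k] {m n : ℕ} {w w' : Matrix (Fin m) (Fin n) k}
    (hw : IsPartialPerm w) (hw' : IsPartialPerm w') (h : ∀ i j, cnt w i j = cnt w' i j) : w = w' := by
  ext a b
  have e1 := cnt_rec w a b
  have e2 := cnt_rec w' a b
  rw [h, h, h, h] at e1
  have hind : (if w a b = 1 then 1 else 0) = (if w' a b = 1 then 1 else 0) := by omega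
  rcases hw.1 a b with h1 | h1 <;> rcases hw'.1 a b with h2 | h2
  · rw [h1, h2]
  · exfalso; rw [h1, h2] at hind; simp at hind
  · exfalso; rw [h1, h2] at hind; simp at hind
  · rw [h1, h2]




/-- identity plus a matrix supported on column `i0` -/
def addColMat {m : ℕ} (i0 : Fin m) (e : Fin m → k) : Matrix (Fin m) (Fin m) k :=
  Matrix.of fun i s => (if i = s then 1 else 0) + (if s = i0 then e i else 0)

/-- identity plus a matrix supported on row `t0` -/
def addRowMat {n : ℕ} (t0 : Fin n) (d : Fin n → k) : Matrix (Fin n) (Fin n) k :=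
  Matrix.of fun t j => (if t = j then 1 else 0) + (if t = t0 then d j else 0)

lemma addColMat_apply {m : ℕ} (i0 : Fin m) (e : Fin m → k) (i s : Fin m) :
    addColMat i0 e i s = (if i = s then 1 else 0) + (if s = i0 then e i else 0) := rfl

lemma addRowMat_apply {n : ℕ} (t0 : Fin n) (d : Fin n → k) (t j : Fin n) :
    addRowMat t0 d t j = (if t = j then 1 else 0) + (if t = t0 then d j else 0) := rfl

lemma addColMat_mul {m n : ℕ} (i0 : Fin m) (e : Fin m → k) (M : Matrix (Fin m) (Fin n) k)
    (i : Fin m) (j : Fin n) : (addColMat i0 e * M) i j = M i j + e i * M i0 j := by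
  classical
  simp only [Matrix.mul_apply, addColMat_apply, add_mul, ite_mul, one_mul, zero_mul,
    Finset.sum_add_distrib, Finset.sum_ite_eq, Finset.sum_ite_eq', Finset.mem_univ, if_true]

lemma mul_addRowMat {m n : ℕ} (t0 : Fin n) (d : Fin n → k) (M : Matrix (Fin m) (Fin n) k)
    (i : Fin m) (j : Fin n) : (M * addRowMat t0 d) i j = M i j + M i t0 * d j := by
  classical
  simp only [Matrix.mul_apply, addRowMat_apply, mul_add, mul_ite, mul_one, mul_zero,
    Finset.sum_add_distrib, Finset.sum_ite_eq, Finset.sum_ite_eq', Finset.mem_univ, if_true]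

lemma lower_mul {m : ℕ} {A B : Matrix (Fin m) (Fin m) k}
    (hA : ∀ i j, i < j → A i j = 0) (hB : ∀ i j, i < j → B i j = 0) :
    ∀ i j, i < j → (A * B) i j = 0 := by
  intro i j hij
  rw [Matrix.mul_apply]
  refine Finset.sum_eq_zero fun s _ => ?_
  rcases lt_or_ge i s with h | h
  · rw [hA i s h, zero_mul]
  · rw [hB s j (lt_of_le_of_lt h hij), mul_zero]

lemma upper_mul {n : ℕ} {A B : Matrix (Fin n) (Fin n) k}
    (hA : ∀ i j, j < i → A i j = 0) (hB : ∀ i j, j < i → B i j = 0) :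
    ∀ i j, j < i → (A * B) i j = 0 := by
  intro i j hij
  rw [Matrix.mul_apply]
  refine Finset.sum_eq_zero fun s _ => ?_
  rcases lt_or_ge j s with h | h
  · rw [hB s j h, mul_zero]
  · rw [hA i s (lt_of_le_of_lt h hij), zero_mul]

/-- if a row of `A` is an identity row, multiplying does not change that row -/
lemma rowid_mul_left {m n : ℕ} {A : Matrix (Fin m) (Fin m) k} {M : Matrix (Fin m) (Fin n) k}
    {i : Fin m} (hA : ∀ s, A i s = (1 : Matrix (Fin m) (Fin m) k) i s) (j : Fin n) :
    (A * M) i j = M i j := by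
  classical
  rw [Matrix.mul_apply]
  have : ∀ s, A i s * M s j = if s = i then M s j else 0 := by
    intro s
    rw [hA s, Matrix.one_apply]
    by_cases h : s = i
    · subst h; simp
    · simp [h, Ne.symm h]
  simp only [this, Finset.sum_ite_eq', Finset.mem_univ, if_true]

lemma rowid_mul {m : ℕ} {A B : Matrix (Fin m) (Fin m) k} {i : Fin m}
    (hA : ∀ s, A i s = (1 : Matrix (Fin m) (Fin m) k) i s)
    (hB : ∀ s, B i s = (1 : Matrix (Fin m) (Fin m) k) i s) :
    ∀ s, (A * B) i s = (1 : Matrix (Fin m) (Fin m) k) i s := fun s => by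
  rw [rowid_mul_left hA s, hB s]


/-- extend an `n×n` matrix to `(n+1)×(n+1)` with a `1` in the new top-left corner -/
def cext {n : ℕ} (C : Matrix (Fin n) (Fin n) k) : Matrix (Fin (n + 1)) (Fin (n + 1)) k :=
  Matrix.of fun i j =>
    if hi : i = 0 then (if j = 0 then 1 else 0)
    else if hj : j = 0 then 0 else C (i.pred hi) (j.pred hj)

lemma cext_zero {n : ℕ} (C : Matrix (Fin n) (Fin n) k) (j : Fin (n + 1)) :
    cext C 0 j = if j = 0 then 1 else 0 := by simp [cext]

lemma cext_col_zero {n : ℕ} (C : Matrix (Fin n) (Fin n) k) (t : Fin (n + 1)) :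
    cext C t 0 = if t = 0 then 1 else 0 := by
  rcases eq_or_ne t 0 with rfl | h
  · simp [cext]
  · simp [cext, h]

lemma cext_succ_succ {n : ℕ} (C : Matrix (Fin n) (Fin n) k) (t j : Fin n) :
    cext C t.succ j.succ = C t j := by
  simp [cext, Fin.succ_ne_zero, Fin.pred_succ]

lemma cext_upper {n : ℕ} (C : Matrix (Fin n) (Fin n) k)
    (hC : ∀ i j, j < i → C i j = 0) : ∀ i j : Fin (n + 1), j < i → cext C i j = 0 := by
  intro i j hij
  have hi : i ≠ 0 := by
    intro h; subst h; exact absurd hij (by simp [Fin.not_lt, Fin.zero_le])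
  rcases eq_or_ne j 0 with rfl | hj
  · simp [cext, hi]
  · show (if hi' : i = 0 then _ else if hj' : j = 0 then _ else C (i.pred hi') (j.pred hj')) = 0
    rw [dif_neg hi, dif_neg hj]
    refine hC _ _ ?_
    have : (j : ℕ) < (i : ℕ) := hij
    have hj' : (j : ℕ) ≠ 0 := fun h => hj (Fin.ext h)
    simp only [Fin.lt_def, Fin.coe_pred]
    omega

lemma cext_det {n : ℕ} (C : Matrix (Fin n) (Fin n) k) : (cext C).det = C.det := by
  rw [Matrix.det_succ_row_zero]
  rw [Finset.sum_eq_single (0 : Fin (n + 1))]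
  · have h1 : cext C 0 0 = 1 := by simp [cext]
    have h2 : (cext C).submatrix Fin.succ (Fin.succAbove 0) = C := by
      ext t j
      rw [Fin.succAbove_zero]
      exact cext_succ_succ C t j
    rw [h1, h2]
    simp
  · intro j _ hj
    rw [cext_zero, if_neg hj]
    ring
  · simp

lemma mul_cext_zero {m n : ℕ} (A : Matrix (Fin m) (Fin (n + 1)) k)
    (C : Matrix (Fin n) (Fin n) k) (i : Fin m) : (A * cext C) i 0 = A i 0 := by
  classical
  rw [Matrix.mul_apply]
  have : ∀ t, A i t * cext C t 0 = if t = 0 then A i t else 0 := fun t => by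
    rw [cext_col_zero]
    by_cases h : t = 0 <;> simp [h]
  simp only [this, Finset.sum_ite_eq', Finset.mem_univ, if_true]

lemma mul_cext_succ {m n : ℕ} (A : Matrix (Fin m) (Fin (n + 1)) k)
    (C : Matrix (Fin n) (Fin n) k) (i : Fin m) (j : Fin n) :
    (A * cext C) i j.succ = ((A.submatrix id Fin.succ) * C) i j := by
  classical
  rw [Matrix.mul_apply, Matrix.mul_apply, Fin.sum_univ_succ]
  have h0 : cext C 0 j.succ = 0 := by rw [cext_zero, if_neg (Fin.succ_ne_zero j)]
  rw [h0, mul_zero, zero_add]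
  refine Finset.sum_congr rfl fun t _ => ?_
  rw [cext_succ_succ]
  rfl




lemma isUnit_det_of_lower {m : ℕ} (b : Matrix (Fin m) (Fin m) k)
    (hb : ∀ i j, i < j → b i j = 0) (h : ∀ i, b i i ≠ 0) : IsUnit b.det := by
  rw [det_lower b hb, isUnit_iff_ne_zero, Finset.prod_ne_zero_iff]
  exact fun a _ => h a

lemma isUnit_det_of_upper {m : ℕ} (c : Matrix (Fin m) (Fin m) k)
    (hc : ∀ i j, j < i → c i j = 0) (h : ∀ i, c i i ≠ 0) : IsUnit c.det := by
  rw [det_upper c hc, isUnit_iff_ne_zero, Finset.prod_ne_zero_iff]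
  exact fun a _ => h a

lemma exists_reduce : ∀ (n m : ℕ) (M : Matrix (Fin m) (Fin n) k),
    ∃ (L : Matrix (Fin m) (Fin m) k) (C : Matrix (Fin n) (Fin n) k),
      IsUnit L.det ∧ IsUnit C.det ∧ (∀ i j, i < j → L i j = 0) ∧ (∀ i j, j < i → C i j = 0) ∧
      IsPartialPerm (L * M * C) ∧
      (∀ i : Fin m, (∀ j, M i j = 0) → ∀ s, L i s = (1 : Matrix (Fin m) (Fin m) k) i s) := by
  intro n
  induction n with
  | zero =>
    intro m M
    refine ⟨1, 1, by simp, by simp, ?_, ?_, ?_, fun i _ s => rfl⟩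
    · intro i j hij; exact Matrix.one_apply_ne (ne_of_lt hij)
    · intro i j hij; exact Matrix.one_apply_ne (ne_of_gt hij)
    · exact ⟨fun i j => j.elim0, fun i j => j.elim0, fun i i' j => j.elim0⟩
  | succ n IH =>
    intro m M
    by_cases hcol : ∀ i, M i 0 = 0
    · obtain ⟨L, C', hLd, hCd, hLt, hCt, hPP, hLid⟩ := IH m (M.submatrix id Fin.succ)
      refine ⟨L, cext C', hLd, by rwa [cext_det], hLt, cext_upper C' hCt, ?_, ?_⟩
      · have hw0 : ∀ i, (L * M * cext C') i 0 = 0 := by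
          intro i
          rw [mul_cext_zero, Matrix.mul_apply]
          exact Finset.sum_eq_zero fun s _ => by rw [hcol s, mul_zero]
        have hws : ∀ (i : Fin m) (j : Fin n),
            (L * M * cext C') i j.succ = (L * M.submatrix id Fin.succ * C') i j := by
          intro i j
          rw [mul_cext_succ (L * M) C' i j]
          congr 1
        obtain ⟨h01, hrow, hcolu⟩ := hPP
        refine ⟨?_, ?_, ?_⟩
        · intro i j
          rcases Fin.eq_zero_or_eq_succ j with rfl | ⟨j', rfl⟩
          · left; exact hw0 i
          · rw [hws]; exact h01 i j'
        · intro i j j' hj hj'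
          rcases Fin.eq_zero_or_eq_succ j with rfl | ⟨a, rfl⟩
          · rw [hw0 i] at hj; exact absurd hj zero_ne_one
          rcases Fin.eq_zero_or_eq_succ j' with rfl | ⟨b, rfl⟩
          · rw [hw0 i] at hj'; exact absurd hj' zero_ne_one
          rw [hws] at hj hj'
          rw [hrow i a b hj hj']
        · intro i i' j hj hj'
          rcases Fin.eq_zero_or_eq_succ j with rfl | ⟨a, rfl⟩
          · rw [hw0 i] at hj; exact absurd hj zero_ne_one
          rw [hws] at hj hj'
          exact hcolu i i' a hj hj'
      · intro i hi s
        exact hLid i (fun j => hi _) s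
    · push_neg at hcol
      classical
      obtain ⟨ix, hix⟩ := hcol
      obtain ⟨i0, hi0mem, hi0min⟩ :=
        Finset.exists_min_image (univ.filter fun i => M i 0 ≠ 0) id ⟨ix, by simpa using hix⟩
      have hp : M i0 0 ≠ 0 := (Finset.mem_filter.mp hi0mem).2
      have hmin : ∀ i : Fin m, i < i0 → M i 0 = 0 := by
        intro i hi
        by_contra hne
        exact absurd (hi0min i (by simpa using hne)) (not_le.mpr hi)
      set p : k := M i0 0 with hpdef
      set e : Fin m → k := fun i => if i = i0 then p⁻¹ - 1 else -(M i 0) * p⁻¹ with he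
      have heval : ∀ i, e i = if i = i0 then p⁻¹ - 1 else -(M i 0) * p⁻¹ := fun _ => rfl
      set L1 : Matrix (Fin m) (Fin m) k := addColMat i0 e with hL1
      set d : Fin (n + 1) → k := fun j => if j = 0 then 0 else -(p⁻¹ * M i0 j) with hd
      set C1 : Matrix (Fin (n + 1)) (Fin (n + 1)) k := addRowMat 0 d with hC1
      set M2 : Matrix (Fin m) (Fin (n + 1)) k := L1 * M * C1 with hM2
      have hM1 : ∀ i j, (L1 * M) i j = M i j + e i * M i0 j := addColMat_mul i0 e M
      have hM2e : ∀ i j, M2 i j = (L1 * M) i j + (L1 * M) i 0 * d j := fun i j =>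
        mul_addRowMat 0 d (L1 * M) i j
      have hM1c0 : ∀ i, (L1 * M) i 0 = if i = i0 then 1 else 0 := by
        intro i
        rw [hM1]
        rcases eq_or_ne i i0 with rfl | hne
        · rw [if_pos rfl]
          simp only [he, if_pos rfl, ← hpdef]
          field_simp
          ring
        · rw [if_neg hne]
          simp only [he, if_neg hne, ← hpdef]
          field_simp
          ring
      have hM2c0 : ∀ i, M2 i 0 = if i = i0 then 1 else 0 := by
        intro i
        rw [hM2e, hM1c0 i]
        simp [hd]
      have hM2r : ∀ j : Fin (n + 1), j ≠ 0 → M2 i0 j = 0 := by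
        intro j hj
        rw [hM2e, hM1c0, if_pos rfl, one_mul, hM1]
        simp only [he, hd, if_pos rfl, if_neg hj]
        ring
      have hM2z : ∀ i : Fin m, (∀ j, M i j = 0) → ∀ j, M2 i j = 0 := by
        intro i hi j
        have hii0 : i ≠ i0 := fun h => hp (by rw [hpdef, ← h]; exact hi 0)
        rw [hM2e, hM1, hM1]
        simp only [he, if_neg hii0, hi]
        ring
      obtain ⟨L', C', hL'd, hC'd, hL't, hC't, hPP, hL'id⟩ := IH m (M2.submatrix id Fin.succ)
      have hM2'z : ∀ j, (M2.submatrix id Fin.succ) i0 j = 0 := fun j =>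
        hM2r _ (Fin.succ_ne_zero j)
      have hL'i0 : ∀ s, L' i0 s = (1 : Matrix (Fin m) (Fin m) k) i0 s := hL'id i0 hM2'z
      set f : Fin m → k := fun i => if i = i0 then 0 else -(L' i i0) with hf
      have hfval : ∀ i, f i = if i = i0 then 0 else -(L' i i0) := fun _ => rfl
      set L2 : Matrix (Fin m) (Fin m) k := addColMat i0 f with hL2
      set X : Matrix (Fin m) (Fin (n + 1)) k := L' * M2 * cext C' with hX
      have hX0 : ∀ i, X i 0 = L' i i0 := by
        intro i
        rw [hX, mul_cext_zero, Matrix.mul_apply]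
        have : ∀ s, L' i s * M2 s 0 = if s = i0 then L' i s else 0 := fun s => by
          rw [hM2c0]
          by_cases h : s = i0 <;> simp [h]
        simp only [this, Finset.sum_ite_eq', Finset.mem_univ, if_true]
      set P : Matrix (Fin m) (Fin n) k := L' * M2.submatrix id Fin.succ * C' with hP
      have hXs : ∀ (i : Fin m) (j : Fin n), X i j.succ = P i j := by
        intro i j
        rw [hX, mul_cext_succ]
        congr 1
      have hPi0 : ∀ j, P i0 j = 0 := by
        intro j
        rw [hP, Matrix.mul_apply]
        refine Finset.sum_eq_zero fun t _ => ?_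
        rw [rowid_mul_left hL'i0, hM2'z, zero_mul]
      set F : Matrix (Fin m) (Fin (n + 1)) k := L2 * X with hF
      have hFe : ∀ i j, F i j = X i j + f i * X i0 j := fun i j => addColMat_mul i0 f X i j
      have hL'11 : L' i0 i0 = 1 := by rw [hL'i0 i0, Matrix.one_apply_eq]
      have hF0 : ∀ i, F i 0 = if i = i0 then 1 else 0 := by
        intro i
        rw [hFe, hX0, hX0, hL'11]
        rcases eq_or_ne i i0 with rfl | hne
        · simp [hf, hL'11]
        · simp [hf, hne]
      have hFs : ∀ (i : Fin m) (j : Fin n), F i j.succ = P i j := by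
        intro i j
        rw [hFe, hXs, hXs, hPi0, mul_zero, add_zero]
      -- triangularity and determinants
      have hL1t : ∀ i j : Fin m, i < j → L1 i j = 0 := by
        intro i j hij
        rw [hL1, addColMat_apply, if_neg (ne_of_lt hij)]
        rcases eq_or_ne j i0 with h | hne
        · rw [if_pos h, heval, if_neg (ne_of_lt (h ▸ hij)), hmin i (h ▸ hij)]
          ring
        · rw [if_neg hne, add_zero]
      have hL1diag : ∀ i, L1 i i ≠ 0 := by
        intro i
        rw [hL1, addColMat_apply, if_pos rfl]
        rcases eq_or_ne i i0 with h | hne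
        · rw [if_pos h, heval, if_pos h]
          intro hcontra
          exact inv_ne_zero hp (by linear_combination hcontra)
        · rw [if_neg hne, add_zero]
          exact one_ne_zero
      have hL2t : ∀ i j : Fin m, i < j → L2 i j = 0 := by
        intro i j hij
        rw [hL2, addColMat_apply, if_neg (ne_of_lt hij)]
        rcases eq_or_ne j i0 with h | hne
        · rw [if_pos h, hfval, zero_add]
          rcases eq_or_ne i i0 with h' | hne'
          · rw [if_pos h']
          · rw [if_neg hne', hL't i i0 (h ▸ hij), neg_zero]
        · rw [if_neg hne, add_zero]
      have hL2diag : ∀ i, L2 i i ≠ 0 := by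
        intro i
        rw [hL2, addColMat_apply, if_pos rfl]
        rcases eq_or_ne i i0 with h | hne
        · rw [if_pos h, hfval, if_pos h, add_zero]
          exact one_ne_zero
        · rw [if_neg hne, add_zero]
          exact one_ne_zero
      have hC1t : ∀ i j : Fin (n + 1), j < i → C1 i j = 0 := by
        intro i j hij
        have hi0' : i ≠ 0 := by
          intro h; subst h; exact absurd hij (by simp [Fin.not_lt, Fin.zero_le])
        rw [hC1, addRowMat_apply, if_neg (ne_of_gt hij), if_neg hi0', add_zero]
      have hC1diag : ∀ i : Fin (n + 1), C1 i i ≠ 0 := by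
        intro i
        rw [hC1, addRowMat_apply, if_pos rfl]
        rcases eq_or_ne i 0 with rfl | hne
        · simp [hd]
        · simp [hne]
      refine ⟨L2 * L' * L1, C1 * cext C', ?_, ?_, ?_, ?_, ?_, ?_⟩
      · rw [Matrix.det_mul, Matrix.det_mul]
        exact ((isUnit_det_of_lower L2 hL2t hL2diag).mul hL'd).mul
          (isUnit_det_of_lower L1 hL1t hL1diag)
      · rw [Matrix.det_mul, cext_det]
        exact (isUnit_det_of_upper C1 hC1t hC1diag).mul hC'd
      · exact lower_mul (lower_mul hL2t hL't) hL1t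
      · exact upper_mul hC1t (cext_upper C' hC't)
      · have hassoc : L2 * L' * L1 * M * (C1 * cext C') = F := by
          rw [hF, hX, hM2]
          simp only [Matrix.mul_assoc]
        rw [hassoc]
        obtain ⟨h01, hrow, hcolu⟩ := hPP
        refine ⟨?_, ?_, ?_⟩
        · intro i j
          rcases Fin.eq_zero_or_eq_succ j with rfl | ⟨j', rfl⟩
          · rw [hF0]
            by_cases h : i = i0
            · right; rw [if_pos h]
            · left; rw [if_neg h]
          · rw [hFs]; exact h01 i j'
        · intro i j j' hj hj'
          rcases Fin.eq_zero_or_eq_succ j with rfl | ⟨a, rfl⟩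
          · rcases Fin.eq_zero_or_eq_succ j' with rfl | ⟨b, rfl⟩
            · rfl
            · exfalso
              rw [hF0] at hj
              have hi : i = i0 := by
                by_contra h; rw [if_neg h] at hj; exact zero_ne_one hj
              subst hi
              rw [hFs, hPi0] at hj'
              exact zero_ne_one hj'
          · rcases Fin.eq_zero_or_eq_succ j' with rfl | ⟨b, rfl⟩
            · exfalso
              rw [hF0] at hj'
              have hi : i = i0 := by
                by_contra h; rw [if_neg h] at hj'; exact zero_ne_one hj'
              subst hi
              rw [hFs, hPi0] at hj
              exact zero_ne_one hj
            · rw [hFs] at hj hj'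
              rw [hrow i a b hj hj']
        · intro i i' j hj hj'
          rcases Fin.eq_zero_or_eq_succ j with rfl | ⟨a, rfl⟩
          · rw [hF0] at hj hj'
            have hi : i = i0 := by
              by_contra h; rw [if_neg h] at hj; exact zero_ne_one hj
            have hi' : i' = i0 := by
              by_contra h; rw [if_neg h] at hj'; exact zero_ne_one hj'
            rw [hi, hi']
          · rw [hFs] at hj hj'
            exact hcolu i i' a hj hj'
      · intro i hi s
        have hii0 : i ≠ i0 := fun h => hp (by rw [hpdef, ← h]; exact hi 0)
        have hL1row : ∀ s, L1 i s = (1 : Matrix (Fin m) (Fin m) k) i s := by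
          intro s
          rw [hL1, addColMat_apply, Matrix.one_apply]
          simp only [he, if_neg hii0, hi 0]
          rcases eq_or_ne s i0 with rfl | hne
          · rw [if_pos rfl]; ring_nf
          · rw [if_neg hne, add_zero]
        have hL'row : ∀ s, L' i s = (1 : Matrix (Fin m) (Fin m) k) i s :=
          hL'id i (fun j => hM2z i hi _)
        have hL2row : ∀ s, L2 i s = (1 : Matrix (Fin m) (Fin m) k) i s := by
          intro s
          rw [hL2, addColMat_apply, Matrix.one_apply]
          simp only [hf, if_neg hii0]
          rw [hL'row i0, Matrix.one_apply_ne hii0, neg_zero]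
          rcases eq_or_ne s i0 with rfl | hne
          · rw [if_pos rfl, add_zero]
          · rw [if_neg hne, add_zero]
        exact rowid_mul (rowid_mul hL2row hL'row) hL1row s


lemma lowerBT {m : ℕ} {b : Matrix (Fin m) (Fin m) k} (hb : ∀ i j, i < j → b i j = 0) :
    b.BlockTriangular OrderDual.toDual := fun x y hxy => hb x y (by simpa using hxy)

lemma inv_lower {m : ℕ} {b : Matrix (Fin m) (Fin m) k} (hb : ∀ i j, i < j → b i j = 0)
    (hd : IsUnit b.det) : ∀ i j, i < j → b⁻¹ i j = 0 := by
  intro i j hij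
  haveI := b.invertibleOfIsUnitDet hd
  exact Matrix.blockTriangular_inv_of_blockTriangular (lowerBT hb)
    (show OrderDual.toDual j < OrderDual.toDual i by simpa using hij)

lemma inv_upper {n : ℕ} {c : Matrix (Fin n) (Fin n) k} (hc : ∀ i j, j < i → c i j = 0)
    (hd : IsUnit c.det) : ∀ i j, j < i → c⁻¹ i j = 0 := by
  intro i j hij
  haveI := c.invertibleOfIsUnitDet hd
  exact Matrix.blockTriangular_inv_of_blockTriangular
    (show c.BlockTriangular id from fun x y hxy => hc x y hxy) hij

lemma exists_pp {m n : ℕ} (M : Matrix (Fin m) (Fin n) k) :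
    ∃ w, IsPartialPerm w ∧ SameBorbit M w := by
  obtain ⟨L, C, hLd, hCd, hLt, hCt, hPP, -⟩ := exists_reduce n m M
  refine ⟨L * M * C, hPP, L⁻¹, C, Matrix.isUnit_nonsing_inv_det L hLd, hCd,
    inv_lower hLt hLd, hCt, ?_⟩
  rw [Matrix.nonsing_inv_nonsing_inv L hLd]

lemma sb_trans {m n : ℕ} {M N P : Matrix (Fin m) (Fin n) k}
    (h1 : SameBorbit M N) (h2 : SameBorbit N P) : SameBorbit M P := by
  obtain ⟨b, c, hbd, hcd, hbt, hct, rfl⟩ := h1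
  obtain ⟨b', c', hbd', hcd', hbt', hct', rfl⟩ := h2
  refine ⟨b * b', c * c', by rw [Matrix.det_mul]; exact hbd.mul hbd',
    by rw [Matrix.det_mul]; exact hcd.mul hcd', lower_mul hbt hbt', upper_mul hct hct', ?_⟩
  rw [Matrix.mul_inv_rev]
  simp only [Matrix.mul_assoc]

lemma sb_symm {m n : ℕ} {M N : Matrix (Fin m) (Fin n) k}
    (h : SameBorbit M N) : SameBorbit N M := by
  obtain ⟨b, c, hbd, hcd, hbt, hct, rfl⟩ := h
  refine ⟨b⁻¹, c⁻¹, Matrix.isUnit_nonsing_inv_det b hbd, Matrix.isUnit_nonsing_inv_det c hcd,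
    inv_lower hbt hbd, inv_upper hct hcd, ?_⟩
  rw [Matrix.nonsing_inv_nonsing_inv b hbd]
  have : b * (b⁻¹ * M * c) * c⁻¹ = b * b⁻¹ * M * (c * c⁻¹) := by
    simp only [Matrix.mul_assoc]
  rw [this, Matrix.mul_nonsing_inv b hbd, Matrix.mul_nonsing_inv c hcd,
    Matrix.one_mul, Matrix.mul_one]

lemma cnt_clamp [DecidableEq k] {m n : ℕ} (M : Matrix (Fin m) (Fin n) k) (i j : ℕ) :
    cnt M i j = cnt M (min i m) (min j n) := by
  unfold cnt
  congr 1
  apply Finset.filter_congr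
  intro p _
  have h1 := p.1.isLt
  have h2 := p.2.isLt
  constructor <;> rintro ⟨a1, a2, a3⟩ <;> exact ⟨by omega, by omega, a3⟩

lemma pp_unique [DecidableEq k] {m n : ℕ} {M w w' : Matrix (Fin m) (Fin n) k}
    (hw : IsPartialPerm w) (hw' : IsPartialPerm w')
    (h1 : SameBorbit M w) (h2 : SameBorbit M w') : w = w' := by
  apply pp_eq_of_cnt_eq hw hw'
  intro i j
  rw [cnt_clamp w i j, cnt_clamp w' i j,
    ← corner_rank_eq_cnt hw _ _ (min_le_right i m) (min_le_right j n),
    ← corner_rank_eq_cnt hw' _ _ (min_le_right i m) (min_le_right j n),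
    rank_corner_invariant h1 _ _ _ _, rank_corner_invariant h2 _ _ _ _]

lemma pp_finite (m n : ℕ) : {w : Matrix (Fin m) (Fin n) k | IsPartialPerm w}.Finite := by
  classical
  have hsub : {w : Matrix (Fin m) (Fin n) k | IsPartialPerm w} ⊆
      Set.range (fun b : Matrix (Fin m) (Fin n) Bool =>
        Matrix.of (fun i j => if b i j then (1 : k) else 0)) := by
    intro w hw
    refine ⟨Matrix.of (fun i j => if w i j = 1 then true else false), ?_⟩
    ext i j
    rcases hw.1 i j with h | h <;> simp [h]
  exact (Set.finite_range _).subset hsub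

end Stmt5

/-- over an infinite field, every `B_-(m) × B_+(n)` orbit on `Mat(m,n)`
contains exactly one partial permutation matrix; in particular there are finitely
many orbits. -/
theorem stmt_5 (k : Type) [Field k] [Infinite k] (m n : ℕ) :
    (∀ M : Matrix (Fin m) (Fin n) k, ∃! w : Matrix (Fin m) (Fin n) k,
      IsPartialPerm w ∧ SameBorbit M w) ∧
    {S : Set (Matrix (Fin m) (Fin n) k) | ∃ M, S = {N | SameBorbit M N}}.Finite := by
  classical
  constructor
  · intro M
    obtain ⟨w, hpp, hsb⟩ := Stmt5.exists_pp M
    exact ⟨w, ⟨hpp, hsb⟩, fun w' h' => Stmt5.pp_unique h'.1 hpp h'.2 hsb⟩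
  · have hsub : {S : Set (Matrix (Fin m) (Fin n) k) | ∃ M, S = {N | SameBorbit M N}} ⊆
        (fun w => {N | SameBorbit w N}) '' {w | IsPartialPerm w} := by
      rintro S ⟨M, rfl⟩
      obtain ⟨w, hpp, hsb⟩ := Stmt5.exists_pp M
      refine ⟨w, hpp, ?_⟩
      ext N
      simp only [Set.mem_setOf_eq]
      exact ⟨fun h => Stmt5.sb_trans hsb h, fun h => Stmt5.sb_trans (Stmt5.sb_symm hsb) h⟩
    exact ((Stmt5.pp_finite m n).image _).subset hsub
end

section
/- Two m×n matrices M and N over a field k lie in the same B_-(m) × B_+(n) orbit (acting by M ↦ b^{-1} M c with b lower triangular invertible, c upper triangular invertible) if and only if for every i ≤ m and j ≤ n, the rank of the northwest i×j submatrix of M equals the rank of the northwest i×j submatrix of N. -/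
namespace BruhatProof

open Matrix Finset OrderDual

variable {k : Type} [Field k] {m n : ℕ}

lemma lo_bt {b : Matrix (Fin m) (Fin m) k} (h : ∀ i j, i < j → b i j = 0) :
    b.BlockTriangular (toDual : Fin m → (Fin m)ᵒᵈ) := by
  intro i j hij
  exact h i j (by exact_mod_cast hij)

lemma up_bt {c : Matrix (Fin n) (Fin n) k} (h : ∀ i j, j < i → c i j = 0) :
    c.BlockTriangular (id : Fin n → Fin n) := by
  intro i j hij
  exact h i j hij

lemma sb_refl (M : Matrix (Fin m) (Fin n) k) : SameBorbit M M := by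
  refine ⟨1, 1, by simp, by simp, ?_, ?_, by simp⟩
  · intro i j hij; exact Matrix.one_apply_ne hij.ne
  · intro i j hij; exact Matrix.one_apply_ne hij.ne'

lemma sb_symm {M N : Matrix (Fin m) (Fin n) k} (h : SameBorbit M N) : SameBorbit N M := by
  obtain ⟨b, c, hb, hc, hbl, hcu, rfl⟩ := h
  haveI : Invertible b := b.invertibleOfIsUnitDet hb
  haveI : Invertible c := c.invertibleOfIsUnitDet hc
  have hbinv : b⁻¹.BlockTriangular (toDual : Fin m → (Fin m)ᵒᵈ) :=
    Matrix.blockTriangular_inv_of_blockTriangular (lo_bt hbl)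
  have hcinv : c⁻¹.BlockTriangular (id : Fin n → Fin n) :=
    Matrix.blockTriangular_inv_of_blockTriangular (up_bt hcu)
  refine ⟨b⁻¹, c⁻¹, b.isUnit_nonsing_inv_det hb, c.isUnit_nonsing_inv_det hc, ?_, ?_, ?_⟩
  · intro i j hij; exact hbinv (by exact_mod_cast hij)
  · intro i j hij; exact hcinv hij
  · rw [Matrix.nonsing_inv_nonsing_inv b hb]
    rw [Matrix.mul_assoc, Matrix.mul_assoc, Matrix.mul_nonsing_inv c hc, Matrix.mul_one,
      ← Matrix.mul_assoc, Matrix.mul_nonsing_inv b hb, Matrix.one_mul]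

lemma sb_trans {M N P : Matrix (Fin m) (Fin n) k} (h1 : SameBorbit M N) (h2 : SameBorbit N P) :
    SameBorbit M P := by
  obtain ⟨b1, c1, hb1, hc1, hbl1, hcu1, rfl⟩ := h1
  obtain ⟨b2, c2, hb2, hc2, hbl2, hcu2, rfl⟩ := h2
  refine ⟨b1 * b2, c1 * c2, by rw [Matrix.det_mul]; exact hb1.mul hb2, by rw [Matrix.det_mul]; exact hc1.mul hc2, ?_, ?_, ?_⟩
  · intro i j hij
    exact ((lo_bt hbl1).mul (lo_bt hbl2)) (show toDual j < toDual i by exact_mod_cast hij)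
  · intro i j hij
    exact ((up_bt hcu1).mul (up_bt hcu2)) hij
  · rw [Matrix.mul_inv_rev]
    noncomm_ring [Matrix.mul_assoc]

lemma nw_mul_lo {b : Matrix (Fin m) (Fin m) k} (hb : ∀ i j, i < j → b i j = 0)
    (M : Matrix (Fin m) (Fin n) k) {i : ℕ} (hi : i ≤ m) {j : ℕ} (hj : j ≤ n) :
    (b * M).submatrix (Fin.castLE hi) (Fin.castLE hj)
      = (b.submatrix (Fin.castLE hi) (Fin.castLE hi)) *
        (M.submatrix (Fin.castLE hi) (Fin.castLE hj)) := by
  ext p q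
  simp only [Matrix.submatrix_apply, Matrix.mul_apply]
  rw [show (∑ r : Fin i, b (Fin.castLE hi p) (Fin.castLE hi r) * M (Fin.castLE hi r)
      (Fin.castLE hj q)) = ∑ r ∈ Finset.univ.map (Fin.castLEEmb hi),
      b (Fin.castLE hi p) r * M r (Fin.castLE hj q) by rw [Finset.sum_map]; rfl]
  refine (Finset.sum_subset (Finset.subset_univ _) ?_).symm
  intro r _ hr
  have hri : ¬ (r : ℕ) < i := by
    simpa [Fin.castLEEmb, Fin.exists_iff, Fin.ext_iff] using hr
  have : Fin.castLE hi p < r := by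
    rw [Fin.lt_def]
    simpa using lt_of_lt_of_le p.isLt (not_lt.mp hri)
  rw [hb _ _ this, zero_mul]

lemma nw_mul_up {c : Matrix (Fin n) (Fin n) k} (hc : ∀ i j, j < i → c i j = 0)
    (M : Matrix (Fin m) (Fin n) k) {i : ℕ} (hi : i ≤ m) {j : ℕ} (hj : j ≤ n) :
    (M * c).submatrix (Fin.castLE hi) (Fin.castLE hj)
      = (M.submatrix (Fin.castLE hi) (Fin.castLE hj)) *
        (c.submatrix (Fin.castLE hj) (Fin.castLE hj)) := by
  ext p q
  simp only [Matrix.submatrix_apply, Matrix.mul_apply]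
  rw [show (∑ r : Fin j, M (Fin.castLE hi p) (Fin.castLE hj r) * c (Fin.castLE hj r)
      (Fin.castLE hj q)) = ∑ r ∈ Finset.univ.map (Fin.castLEEmb hj),
      M (Fin.castLE hi p) r * c r (Fin.castLE hj q) by rw [Finset.sum_map]; rfl]
  refine (Finset.sum_subset (Finset.subset_univ _) ?_).symm
  intro r _ hr
  have hrj : ¬ (r : ℕ) < j := by
    simpa [Fin.castLEEmb, Fin.exists_iff, Fin.ext_iff] using hr
  have : Fin.castLE hj q < r := by
    rw [Fin.lt_def]
    simpa using lt_of_lt_of_le q.isLt (not_lt.mp hrj)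
  rw [hc _ _ this, mul_zero]

/-- the NW corner of an invertible lower triangular matrix has unit determinant -/
lemma nw_det_lo {b : Matrix (Fin m) (Fin m) k} (hb : ∀ i j, i < j → b i j = 0)
    (hdet : IsUnit b.det) {i : ℕ} (hi : i ≤ m) :
    IsUnit ((b.submatrix (Fin.castLE hi) (Fin.castLE hi)).det) := by
  have h1 : b.det = ∏ r : Fin m, b r r := Matrix.det_of_lowerTriangular b (lo_bt hb)
  have hdiag : ∀ r : Fin m, b r r ≠ 0 := by
    intro r
    have := hdet.ne_zero
    rw [h1] at this
    exact fun h0 => this (Finset.prod_eq_zero (Finset.mem_univ r) h0)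
  have h2 : (b.submatrix (Fin.castLE hi) (Fin.castLE hi)).det
      = ∏ r : Fin i, b (Fin.castLE hi r) (Fin.castLE hi r) := by
    apply Matrix.det_of_lowerTriangular
    intro p q hpq
    exact hb _ _ (by exact_mod_cast hpq)
  rw [h2]
  exact isUnit_iff_ne_zero.mpr (Finset.prod_ne_zero_iff.mpr fun r _ => hdiag _)

lemma nw_det_up {c : Matrix (Fin n) (Fin n) k} (hc : ∀ i j, j < i → c i j = 0)
    (hdet : IsUnit c.det) {j : ℕ} (hj : j ≤ n) :
    IsUnit ((c.submatrix (Fin.castLE hj) (Fin.castLE hj)).det) := by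
  have h1 : c.det = ∏ r : Fin n, c r r := Matrix.det_of_upperTriangular (up_bt hc)
  have hdiag : ∀ r : Fin n, c r r ≠ 0 := by
    intro r
    have := hdet.ne_zero
    rw [h1] at this
    exact fun h0 => this (Finset.prod_eq_zero (Finset.mem_univ r) h0)
  have h2 : (c.submatrix (Fin.castLE hj) (Fin.castLE hj)).det
      = ∏ r : Fin j, c (Fin.castLE hj r) (Fin.castLE hj r) := by
    apply Matrix.det_of_upperTriangular
    intro p q hpq
    exact hc _ _ hpq
  rw [h2]
  exact isUnit_iff_ne_zero.mpr (Finset.prod_ne_zero_iff.mpr fun r _ => hdiag _)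

/-- forward direction: ranks of NW submatrices are orbit invariants -/
lemma rank_nw_of_sb {M N : Matrix (Fin m) (Fin n) k} (h : SameBorbit M N)
    {i j : ℕ} (hi : i ≤ m) (hj : j ≤ n) :
    (N.submatrix (Fin.castLE hi) (Fin.castLE hj)).rank =
      (M.submatrix (Fin.castLE hi) (Fin.castLE hj)).rank := by
  obtain ⟨b, c, hb, hc, hbl, hcu, rfl⟩ := h
  haveI : Invertible b := b.invertibleOfIsUnitDet hb
  have hbinv : ∀ p q : Fin m, p < q → b⁻¹ p q = 0 := fun p q hpq =>
    Matrix.blockTriangular_inv_of_blockTriangular (lo_bt hbl)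
      (show toDual q < toDual p by exact_mod_cast hpq)
  rw [nw_mul_up hcu (b⁻¹ * M) hi hj, nw_mul_lo hbinv M hi hj]
  rw [Matrix.rank_mul_eq_left_of_isUnit_det _ _ (nw_det_up hcu hc hj),
    Matrix.rank_mul_eq_right_of_isUnit_det _ _
      (nw_det_lo hbinv (b.isUnit_nonsing_inv_det hb) hi)]

/-- partial permutation matrix -/
def IsPP (P : Matrix (Fin m) (Fin n) k) : Prop :=
  (∀ i j, P i j = 0 ∨ P i j = 1) ∧
  (∀ i j j', P i j ≠ 0 → P i j' ≠ 0 → j = j') ∧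
  (∀ i i' j, P i j ≠ 0 → P i' j ≠ 0 → i = i')

open Classical in
lemma rank_pp {P : Matrix (Fin m) (Fin n) k} (h : IsPP P) :
    P.rank = (Finset.univ.filter fun p : Fin m × Fin n => P p.1 p.2 ≠ 0).card := by
  obtain ⟨hv, hr, hc⟩ := h
  set s : Finset (Fin m) := Finset.univ.filter (fun i => ∃ j, P i j ≠ 0) with hs
  set e : Fin m → (Fin m → k) := fun i => Pi.single i 1 with he
  have hmem : ∀ i, i ∈ s ↔ ∃ j, P i j ≠ 0 := by intro i; simp [hs]
  have hcol : ∀ j : Fin n, (∀ i, P i j = 0) ∨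
      ∃ i ∈ s, Pᵀ j = e i := by
    intro j
    by_cases hz : ∀ i, P i j = 0
    · exact Or.inl hz
    · right
      push_neg at hz; obtain ⟨i0, hi0⟩ := hz
      refine ⟨i0, (hmem i0).mpr ⟨j, hi0⟩, ?_⟩
      funext i
      by_cases hii : i = i0
      · subst hii
        rcases hv i j with h0 | h1
        · exact absurd h0 hi0
        · simp [he, Matrix.transpose_apply, h1, Pi.single_eq_same]
      · have : P i j = 0 := by
          by_contra hne; exact hii (hc i i0 j hne hi0)
        simp [he, Matrix.transpose_apply, this, Pi.single_eq_of_ne hii]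
  have hspan : Submodule.span k (Set.range Pᵀ) =
      Submodule.span k (e '' ↑s) := by
    apply le_antisymm
    · rw [Submodule.span_le]; rintro _ ⟨j, rfl⟩
      rcases hcol j with h0 | ⟨i, his, hei⟩
      · have : Pᵀ j = 0 := funext fun i => h0 i
        rw [this]; exact Submodule.zero_mem _
      · rw [hei]; exact Submodule.subset_span ⟨i, his, rfl⟩
    · rw [Submodule.span_le]; rintro _ ⟨i, his, rfl⟩
      obtain ⟨j, hj⟩ := (hmem i).mp his
      rcases hcol j with h0 | ⟨i', hi's, hei⟩
      · exact absurd (h0 i) hj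
      · have hii' : i' = i := by
          have h1 : P i' j ≠ 0 := by
            intro h0
            rw [show P i' j = Pᵀ j i' from rfl, hei] at h0
            simp [he, Pi.single_eq_same] at h0
          exact hc i' i j h1 hj
        subst hii'
        exact Submodule.subset_span ⟨j, hei⟩
  rw [Matrix.rank_eq_finrank_span_cols, show Set.range P.col = Set.range Pᵀ from rfl, hspan]
  have himg : e '' ↑s = Set.range (fun i : ↥s => e (i : Fin m)) := by
    rw [Set.image_eq_range]
    rfl
  have hli : LinearIndependent k (fun i : ↥s => e (i : Fin m)) := by
    have h0 : (fun i : ↥s => e (i : Fin m))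
        = (⇑(Pi.basisFun k (Fin m)) ∘ fun i : ↥s => (i : Fin m)) := by
      funext i
      simp [he, Pi.basisFun_apply]
    rw [h0]
    exact (Pi.basisFun k (Fin m)).linearIndependent.comp _ Subtype.val_injective
  rw [himg, finrank_span_eq_card hli, Fintype.card_coe]
  symm
  refine Finset.card_bij (fun p _ => p.1) ?_ ?_ ?_
  · intro p hp
    simp only [Finset.mem_filter, Finset.mem_univ, true_and] at hp
    exact (hmem p.1).mpr ⟨p.2, hp⟩
  · intro p hp q hq hpq
    simp only [Finset.mem_filter, Finset.mem_univ, true_and] at hp hq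
    have hpq' : p.1 = q.1 := hpq
    have := hr p.1 p.2 q.2 hp (by rw [hpq']; exact hq)
    exact Prod.ext hpq' this
  · intro i hi
    obtain ⟨j, hj⟩ := (hmem i).mp hi
    exact ⟨(i, j), by simpa using hj, rfl⟩

open Classical in
/-- number of support entries in the NW `i × j` box -/
noncomputable def cnt (P : Matrix (Fin m) (Fin n) k) (i j : ℕ) : ℕ :=
  (Finset.univ.filter fun p : Fin m × Fin n =>
    P p.1 p.2 ≠ 0 ∧ (p.1 : ℕ) < i ∧ (p.2 : ℕ) < j).card

/-- NW submatrix of a PP matrix is PP -/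
lemma isPP_nw {P : Matrix (Fin m) (Fin n) k} (h : IsPP P) {i j : ℕ} (hi : i ≤ m) (hj : j ≤ n) :
    IsPP (P.submatrix (Fin.castLE hi) (Fin.castLE hj)) := by
  obtain ⟨hv, hr, hc⟩ := h
  refine ⟨fun a b => hv _ _, ?_, ?_⟩
  · intro a b b' h1 h2
    have := hr _ _ _ h1 h2
    exact Fin.castLE_injective hj this
  · intro a a' b h1 h2
    have := hc _ _ _ h1 h2
    exact Fin.castLE_injective hi this

open Classical in
lemma rank_nw_pp {P : Matrix (Fin m) (Fin n) k} (h : IsPP P) {i j : ℕ}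
    (hi : i ≤ m) (hj : j ≤ n) :
    (P.submatrix (Fin.castLE hi) (Fin.castLE hj)).rank = cnt P i j := by
  rw [rank_pp (isPP_nw h hi hj), cnt]
  refine Finset.card_bij (fun p _ => (Fin.castLE hi p.1, Fin.castLE hj p.2)) ?_ ?_ ?_
  · intro p hp
    simp only [Finset.mem_filter, Finset.mem_univ, true_and,
      Matrix.submatrix_apply] at hp ⊢
    exact ⟨(Finset.mem_filter.mp hp).2, p.1.isLt, p.2.isLt⟩
  · intro p hp q hq hpq
    have h1 : Fin.castLE hi p.1 = Fin.castLE hi q.1 := congrArg Prod.fst hpq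
    have h2 : Fin.castLE hj p.2 = Fin.castLE hj q.2 := congrArg Prod.snd hpq
    exact Prod.ext (Fin.castLE_injective hi h1) (Fin.castLE_injective hj h2)
  · intro p hp
    simp only [Finset.mem_filter, Finset.mem_univ, true_and] at hp
    obtain ⟨hne, h1, h2⟩ := hp
    refine ⟨(⟨(p.1 : ℕ), h1⟩, ⟨(p.2 : ℕ), h2⟩), ?_, ?_⟩
    · simp only [Finset.mem_filter, Finset.mem_univ, true_and, Matrix.submatrix_apply]
      exact Finset.mem_filter.mpr ⟨Finset.mem_univ _, hne⟩
    · exact Prod.ext (Fin.ext rfl) (Fin.ext rfl)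

open Classical in
lemma cnt_rel (P : Matrix (Fin m) (Fin n) k) (a : Fin m) (b : Fin n) :
    cnt P (a + 1) (b + 1) + cnt P a b
      = cnt P (a + 1) b + cnt P a (b + 1) + (if P a b ≠ 0 then 1 else 0) := by
  have hsingle : (if P a b ≠ 0 then 1 else 0)
      = ∑ p : Fin m × Fin n, (if P p.1 p.2 ≠ 0 ∧ (p.1 : ℕ) = (a : ℕ) ∧ (p.2 : ℕ) = (b : ℕ)
          then 1 else 0) := by
    symm
    rw [Finset.sum_eq_single_of_mem (a, b) (Finset.mem_univ _) ?_]
    · simp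
    · intro p _ hp
      have : ¬ ((p.1 : ℕ) = (a : ℕ) ∧ (p.2 : ℕ) = (b : ℕ)) := by
        intro ⟨h1, h2⟩
        exact hp (Prod.ext (Fin.ext h1) (Fin.ext h2))
      rw [if_neg (by tauto)]
  simp only [cnt, Finset.card_filter, hsingle, ← Finset.sum_add_distrib]
  refine Finset.sum_congr rfl fun p _ => ?_
  by_cases hP : P p.1 p.2 = 0
  · simp [hP]
  · simp only [ne_eq, hP, not_false_iff, true_and]
    split_ifs <;> omega

lemma pp_ext {P Q : Matrix (Fin m) (Fin n) k} (hP : IsPP P) (hQ : IsPP Q)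
    (h : ∀ i j, i ≤ m → j ≤ n → cnt P i j = cnt Q i j) : P = Q := by
  ext a b
  have ha1 : (a : ℕ) + 1 ≤ m := a.isLt
  have hb1 : (b : ℕ) + 1 ≤ n := b.isLt
  have ha : (a : ℕ) ≤ m := le_of_lt a.isLt
  have hb : (b : ℕ) ≤ n := le_of_lt b.isLt
  have e1 := cnt_rel P a b
  have e2 := cnt_rel Q a b
  rw [h _ _ ha1 hb1, h _ _ ha hb, h _ _ ha1 hb, h _ _ ha hb1] at e1
  rcases hP.1 a b with h0 | h1 <;> rcases hQ.1 a b with g0 | g1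
  · rw [h0, g0]
  · exfalso; simp [h0, g1] at e1 e2; omega
  · exfalso; simp [h1, g0] at e1 e2; omega
  · rw [h1, g1]

lemma isPP_append {P' : Matrix (Fin m) (Fin n) k} (h : IsPP P') {e : Fin m → k}
    (he01 : ∀ a, e a = 0 ∨ e a = 1)
    (herow : ∀ a, e a ≠ 0 → ∀ j, P' a j = 0)
    (hecol : ∀ a a', e a ≠ 0 → e a' ≠ 0 → a = a')
    {R : Matrix (Fin m) (Fin (n+1)) k}
    (hR1 : ∀ a (j : Fin n), R a j.castSucc = P' a j)
    (hR2 : ∀ a, R a (Fin.last n) = e a) : IsPP R := by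
  obtain ⟨hv, hr, hc⟩ := h
  refine ⟨?_, ?_, ?_⟩
  · intro a j
    induction j using Fin.lastCases with
    | last => rw [hR2]; exact he01 a
    | cast j => rw [hR1]; exact hv a j
  · intro a j j' h1 h2
    induction j using Fin.lastCases with
    | last =>
      induction j' using Fin.lastCases with
      | last => rfl
      | cast j' =>
        rw [hR2] at h1; rw [hR1] at h2
        exact absurd (herow a h1 j') h2
    | cast j =>
      induction j' using Fin.lastCases with
      | last =>
        rw [hR1] at h1; rw [hR2] at h2
        exact absurd (herow a h2 j) h1
      | cast j' =>
        rw [hR1] at h1 h2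
        rw [hr a j j' h1 h2]
  · intro a a' j h1 h2
    induction j using Fin.lastCases with
    | last =>
      rw [hR2] at h1 h2
      exact hecol a a' h1 h2
    | cast j =>
      rw [hR1] at h1 h2
      exact hc a a' j h1 h2

open Classical in
lemma exists_pp {m : ℕ} (N : ℕ) (M : Matrix (Fin m) (Fin N) k) :
    ∃ P : Matrix (Fin m) (Fin N) k, IsPP P ∧ SameBorbit M P := by
  induction N with
  | zero =>
    exact ⟨M, ⟨fun i j => j.elim0, fun i j => j.elim0, fun i i' j => j.elim0⟩, sb_refl M⟩
  | succ N ih =>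
    obtain ⟨P', hPP', b, c', hb, hc', hbl, hcu, hP'⟩ := ih (M.submatrix id Fin.castSucc)
    obtain ⟨hv, hrw, hcl⟩ := hPP'
    set M' : Matrix (Fin m) (Fin N) k := M.submatrix id Fin.castSucc with hM'
    -- step 1 : extend c' by a 1 in the corner
    set c₀ : Matrix (Fin (N+1)) (Fin (N+1)) k := fun a b' =>
      if ha : (a : ℕ) < N then (if hb' : (b' : ℕ) < N then c' ⟨a, ha⟩ ⟨b', hb'⟩ else 0)
      else (if (b' : ℕ) < N then 0 else 1) with hc₀def
    have hc₀u : ∀ a b' : Fin (N+1), b' < a → c₀ a b' = 0 := by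
      intro a b' hlt
      rw [hc₀def]
      by_cases ha : (a : ℕ) < N
      · have hb' : (b' : ℕ) < N := lt_trans hlt ha
        simp only [ha, hb', dif_pos]
        exact hcu _ _ (by exact_mod_cast hlt)
      · have hb' : (b' : ℕ) < N := by
          have := a.isLt; have := (Fin.lt_def.mp hlt); omega
        simp [ha, hb']
    have hc₀diag : ∀ r : Fin N, c₀ r.castSucc r.castSucc = c' r r := by
      intro r
      rw [hc₀def]
      simp only [Fin.coe_castSucc, r.isLt, dif_pos]
    have hdet₀ : IsUnit c₀.det := by
      have h1 : c₀.det = ∏ r : Fin (N+1), c₀ r r := Matrix.det_of_upperTriangular (up_bt hc₀u)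
      have h2 : c'.det = ∏ r : Fin N, c' r r := Matrix.det_of_upperTriangular (up_bt hcu)
      have h3 : c₀.det = c'.det := by
        rw [h1, h2, Fin.prod_univ_castSucc]
        have hlast : c₀ (Fin.last N) (Fin.last N) = 1 := by
          rw [hc₀def]; simp
        rw [hlast, mul_one]
        exact Finset.prod_congr rfl fun r _ => hc₀diag r
      rw [h3]; exact hc'
    set Q : Matrix (Fin m) (Fin (N+1)) k := b⁻¹ * M * c₀ with hQdef
    have hsb1 : SameBorbit M Q := ⟨b, c₀, hb, hdet₀, hbl, hc₀u, rfl⟩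
    have hMc₀ : ∀ (i : Fin m) (j : Fin N), (M * c₀) i j.castSucc = (M' * c') i j := by
      intro i j
      rw [Matrix.mul_apply, Matrix.mul_apply, Fin.sum_univ_castSucc]
      have hlast : c₀ (Fin.last N) j.castSucc = 0 := by
        rw [hc₀def]; simp [j.isLt]
      rw [hlast, mul_zero, add_zero]
      refine Finset.sum_congr rfl fun r _ => ?_
      have : c₀ r.castSucc j.castSucc = c' r j := by
        rw [hc₀def]
        simp only [Fin.coe_castSucc, r.isLt, j.isLt, dif_pos]
      rw [this, hM']
      rfl
    have hQcol : ∀ (a : Fin m) (j : Fin N), Q a j.castSucc = P' a j := by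
      intro a j
      have hassoc : Q = b⁻¹ * (M * c₀) := Matrix.mul_assoc _ _ _
      rw [hassoc, Matrix.mul_apply]
      simp_rw [hMc₀]
      rw [← Matrix.mul_apply, ← Matrix.mul_assoc, ← hP']
    -- step 2 : clear the entries of the last column lying in pivot rows
    set u : Fin m → k := fun a => Q a (Fin.last N) with hu
    set g : Fin N → k := fun r => ∑ i, P' i r * u i with hg
    set c₁ : Matrix (Fin (N+1)) (Fin (N+1)) k := fun a b' =>
      if b' = Fin.last N then (if ha : (a : ℕ) < N then -(g ⟨a, ha⟩) else 1)
      else (if a = b' then 1 else 0) with hc₁def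
    have hc₁u : ∀ a b' : Fin (N+1), b' < a → c₁ a b' = 0 := by
      intro a b' hlt
      have hne : b' ≠ Fin.last N := by
        intro hEq
        have := a.isLt; have := Fin.lt_def.mp hlt
        rw [hEq] at this; simp [Fin.last] at this; omega
      rw [hc₁def]
      simp only [hne, if_false]
      exact if_neg hlt.ne'
    have hdet₁ : IsUnit c₁.det := by
      have h1 : c₁.det = ∏ r : Fin (N+1), c₁ r r := Matrix.det_of_upperTriangular (up_bt hc₁u)
      rw [h1]
      have : ∀ r : Fin (N+1), c₁ r r = 1 := by
        intro r
        rw [hc₁def]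
        by_cases hr : r = Fin.last N
        · subst hr; simp [Fin.last]
        · simp [hr]
      rw [Finset.prod_congr rfl fun r _ => this r]
      simp
    set Q' : Matrix (Fin m) (Fin (N+1)) k := Q * c₁ with hQ'def
    have hsb2 : SameBorbit Q Q' := by
      refine ⟨1, c₁, by simp, hdet₁, ?_, hc₁u, ?_⟩
      swap
      · have h1 : (1 : Matrix (Fin m) (Fin m) k)⁻¹ = 1 := by
          rw [Matrix.inv_eq_left_inv]; rw [Matrix.one_mul]
        rw [h1, Matrix.one_mul]
      intro i j hij; exact Matrix.one_apply_ne hij.ne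
    have hQ'col : ∀ (a : Fin m) (j : Fin N), Q' a j.castSucc = P' a j := by
      intro a j
      rw [hQ'def, Matrix.mul_apply]
      rw [Finset.sum_eq_single j.castSucc]
      · have : c₁ j.castSucc j.castSucc = 1 := by
          rw [hc₁def]
          simp [(Fin.castSucc_lt_last j).ne]
        rw [this, mul_one]
        exact hQcol a j
      · intro r _ hrne
        have : c₁ r j.castSucc = 0 := by
          rw [hc₁def]
          simp [(Fin.castSucc_lt_last j).ne, hrne]
        rw [this, mul_zero]
      · intro h; exact absurd (Finset.mem_univ _) h
    have hQ'last : ∀ a : Fin m, Q' a (Fin.last N) = u a - ∑ r : Fin N, P' a r * g r := by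
      intro a
      rw [hQ'def, Matrix.mul_apply, Fin.sum_univ_castSucc]
      have hlast : c₁ (Fin.last N) (Fin.last N) = 1 := by
        rw [hc₁def]; simp [Fin.last]
      rw [hlast, mul_one]
      have hterm : ∀ r : Fin N, Q a r.castSucc * c₁ r.castSucc (Fin.last N)
          = -(P' a r * g r) := by
        intro r
        have h1 : c₁ r.castSucc (Fin.last N) = -(g r) := by
          rw [hc₁def]
          simp only [if_pos rfl, Fin.coe_castSucc, r.isLt, dif_pos]
          simp
        rw [h1, hQcol a r, mul_neg]
      rw [Finset.sum_congr rfl fun r _ => hterm r]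
      have hneg : ∑ r : Fin N, -(P' a r * g r) = -(∑ r : Fin N, P' a r * g r) := by
        rw [Finset.sum_neg_distrib]
      rw [hneg, hu]
      ring
    have hu'piv : ∀ a : Fin m, (∃ j0, P' a j0 ≠ 0) → Q' a (Fin.last N) = 0 := by
      intro a ⟨j0, hj0⟩
      have hval : P' a j0 = 1 := (hv a j0).resolve_left hj0
      have hsum : ∑ r : Fin N, P' a r * g r = g j0 := by
        rw [Finset.sum_eq_single j0]
        · rw [hval, one_mul]
        · intro r _ hrne
          have : P' a r = 0 := by
            by_contra hne
            exact hrne (hrw a r j0 hne hj0)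
          rw [this, zero_mul]
        · intro h; exact absurd (Finset.mem_univ _) h
      have hgj0 : g j0 = u a := by
        show (∑ i : Fin m, P' i j0 * u i) = u a
        rw [Finset.sum_eq_single a]
        · rw [hval, one_mul]
        · intro i _ hine
          have : P' i j0 = 0 := by
            by_contra hne
            exact hine (hcl i a j0 hne hj0)
          rw [this, zero_mul]
        · intro h; exact absurd (Finset.mem_univ _) h
      rw [hQ'last, hsum, hgj0, sub_self]
    -- step 3 : normalise the remaining part of the last column
    by_cases hz : ∀ a : Fin m, Q' a (Fin.last N) = 0
    · refine ⟨Q', ?_, sb_trans hsb1 hsb2⟩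
      refine isPP_append ⟨hv, hrw, hcl⟩ (e := fun a => Q' a (Fin.last N)) ?_ ?_ ?_ hQ'col
        (fun a => rfl)
      · intro a; left; exact hz a
      · intro a ha; exact absurd (hz a) ha
      · intro a a' ha _; exact absurd (hz a) ha
    · push_neg at hz
      obtain ⟨a0, ha0⟩ := hz
      set S : Finset (Fin m) := Finset.univ.filter (fun a => Q' a (Fin.last N) ≠ 0) with hS
      have hSne : S.Nonempty := ⟨a0, by simp [hS, ha0]⟩
      set i0 : Fin m := S.min' hSne with hi0def
      have hi0 : Q' i0 (Fin.last N) ≠ 0 := by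
        have h := Finset.mem_filter.mp (S.min'_mem hSne)
        exact h.2
      have hmin : ∀ a : Fin m, a < i0 → Q' a (Fin.last N) = 0 := by
        intro a hlt
        by_contra hne
        have : a ∈ S := by simp [hS, hne]
        exact absurd (S.min'_le a this) (not_le.mpr hlt)
      have hrowi0 : ∀ j, P' i0 j = 0 := by
        intro j
        by_contra hne
        exact hi0 (hu'piv i0 ⟨j, hne⟩)
      set b₁ : Matrix (Fin m) (Fin m) k := fun a r =>
        if r = i0 then Q' a (Fin.last N) else (if a = r then 1 else 0) with hb₁def
      have hb₁l : ∀ a r : Fin m, a < r → b₁ a r = 0 := by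
        intro a r hlt
        rw [hb₁def]
        by_cases hr : r = i0
        · subst hr; simp only [if_pos rfl]; exact hmin a hlt
        · simp [hr, hlt.ne]
      have hdet₁' : IsUnit b₁.det := by
        have h1 : b₁.det = ∏ r : Fin m, b₁ r r := Matrix.det_of_lowerTriangular b₁ (lo_bt hb₁l)
        have h2 : ∀ r : Fin m, b₁ r r = if r = i0 then Q' i0 (Fin.last N) else 1 := by
          intro r
          rw [hb₁def]
          by_cases hr : r = i0
          · subst hr; simp
          · simp [hr]
        rw [h1, Finset.prod_congr rfl fun r _ => h2 r, Finset.prod_ite_eq' Finset.univ i0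
          (fun _ => Q' i0 (Fin.last N))]
        simp [isUnit_iff_ne_zero, hi0]
      set P : Matrix (Fin m) (Fin (N+1)) k := fun a j =>
        if hj : (j : ℕ) < N then P' a ⟨j, hj⟩ else (if a = i0 then 1 else 0) with hPdef
      have hP1 : ∀ a (j : Fin N), P a j.castSucc = P' a j := by
        intro a j
        rw [hPdef]
        simp only [Fin.coe_castSucc, j.isLt, dif_pos]
      have hP2 : ∀ a, P a (Fin.last N) = if a = i0 then 1 else 0 := by
        intro a
        rw [hPdef]
        simp [Fin.last]
      have hfact : Q' = b₁ * P := by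
        ext a col
        rw [Matrix.mul_apply]
        have hsummand : ∀ r : Fin m, b₁ a r * P r col
            = (if r = i0 then Q' a (Fin.last N) * P i0 col else 0)
              + (if r = a then (if a = i0 then 0 else P a col) else 0) := by
          intro r
          rw [hb₁def]
          by_cases hr : r = i0
          · subst hr
            by_cases har : a = i0
            · simp [har]
            · simp [if_pos rfl, Ne.symm har, har]
          · by_cases har : r = a
            · subst har
              simp [hr, Ne.symm hr]
            · simp [hr, Ne.symm har, har]
        rw [Finset.sum_congr rfl fun r _ => hsummand r, Finset.sum_add_distrib,
          Finset.sum_ite_eq' Finset.univ i0 (fun _ => Q' a (Fin.last N) * P i0 col),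
          Finset.sum_ite_eq' Finset.univ a (fun _ => if a = i0 then 0 else P a col)]
        simp only [Finset.mem_univ, if_true]
        induction col using Fin.lastCases with
        | last =>
          rw [hP2 i0, if_pos rfl, mul_one, hP2 a]
          by_cases har : a = i0
          · subst har; simp
          · simp [har]
        | cast j =>
          rw [hP1 i0 j, hrowi0 j, mul_zero, zero_add, hQ'col a j, hP1 a j]
          by_cases har : a = i0
          · subst har; simp [hrowi0 j]
          · simp [har]
      have hsb3 : SameBorbit Q' P := by
        refine ⟨b₁, 1, hdet₁', by simp, hb₁l, ?_, ?_⟩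
        · intro i j hij; exact Matrix.one_apply_ne hij.ne'
        · rw [Matrix.mul_one, hfact, ← Matrix.mul_assoc, Matrix.nonsing_inv_mul b₁ hdet₁',
            Matrix.one_mul]
      refine ⟨P, ?_, sb_trans (sb_trans hsb1 hsb2) hsb3⟩
      refine isPP_append ⟨hv, hrw, hcl⟩ (e := fun a => if a = i0 then (1:k) else 0) ?_ ?_ ?_
        hP1 hP2
      · intro a
        by_cases har : a = i0
        · right; simp [har]
        · left; simp [har]
      · intro a ha j
        have har : a = i0 := by
          by_contra hne
          simp [hne] at ha
        subst har
        exact hrowi0 j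
      · intro a a' ha ha'
        have har : a = i0 := by
          by_contra hne
          simp [hne] at ha
        have har' : a' = i0 := by
          by_contra hne
          simp [hne] at ha'
        rw [har, har']

end BruhatProof

/-- two `m × n` matrices over a field lie in the same `B_-(m) × B_+(n)`
orbit iff all their northwest `i × j` submatrices have equal rank. -/
theorem stmt_6 (k : Type) [Field k] (m n : ℕ) (M N : Matrix (Fin m) (Fin n) k) :
    SameBorbit M N ↔
      ∀ (i j : ℕ) (hi : i ≤ m) (hj : j ≤ n),
        (M.submatrix (Fin.castLE hi) (Fin.castLE hj)).rank =
          (N.submatrix (Fin.castLE hi) (Fin.castLE hj)).rank := by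
  constructor
  · intro h i j hi hj
    exact (BruhatProof.rank_nw_of_sb h hi hj).symm
  · intro h
    obtain ⟨P, hPP, hMP⟩ := BruhatProof.exists_pp n M
    obtain ⟨Q, hQP, hNQ⟩ := BruhatProof.exists_pp n N
    have hPQ : P = Q := by
      apply BruhatProof.pp_ext hPP hQP
      intro i j hi hj
      rw [← BruhatProof.rank_nw_pp hPP hi hj, ← BruhatProof.rank_nw_pp hQP hi hj,
        BruhatProof.rank_nw_of_sb hMP hi hj, BruhatProof.rank_nw_of_sb hNQ hi hj]
      exact h i j hi hj
    exact BruhatProof.sb_trans hMP (hPQ ▸ BruhatProof.sb_symm hNQ)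
end
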